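/- Let μ be a probability measure on E, V : E → ℝ bounded measurable, m ≥ 1. Define S(x,dy) = e^{-U(x)/m}·δ_x(dy) + (1 - e^{-U(x)/m})·Ψ_{e^{-U/m}}(μ)(dy) for a bounded nonnegative U, and S̃(x,dy) = e^{-U(x)/m}·δ_x(dy) + (1 - e^{-U(x)/m})·μ(dy). Then sup_x ‖S(x,·) - S̃(x,·)‖_tv ≤ ‖U‖²/m², where ‖U‖ = sup_x |U(x)|. -/

import Mathlib

open MeasureTheory

lemma integrable_of_bdd {E : Type*} [MeasurableSpace E] {μ : Measure E} [IsFiniteMeasure μ]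
    {h : E → ℝ} (hm : Measurable h) {C : ℝ} (hb : ∀ y, |h y| ≤ C) :
    Integrable h μ :=
  (integrable_const C).mono' hm.aestronglyMeasurable (Filter.Eventually.of_forall (fun y => by
    simpa using hb y))

theorem stmt14 {E : Type*} [MeasurableSpace E] (μ : Measure E) [IsProbabilityMeasure μ]
    (U : E → ℝ) (m : ℝ) (hm : 1 ≤ m)
    (hU : Measurable U) (hU0 : ∀ x, 0 ≤ U x)
    (hUbdd : BddAbove (Set.range fun x => |U x|)) :
    ∀ x : E, ∀ f : E → ℝ, Measurable f → (∀ y z, |f y - f z| ≤ 1) →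
      |(Real.exp (-U x / m) * f x
          + (1 - Real.exp (-U x / m)) *
            ((∫ y, f y * Real.exp (-U y / m) ∂μ) / (∫ y, Real.exp (-U y / m) ∂μ)))
        - (Real.exp (-U x / m) * f x
          + (1 - Real.exp (-U x / m)) * (∫ y, f y ∂μ))|
      ≤ (⨆ y, |U y|) ^ 2 / m ^ 2 := by
  intro x f hf hosc
  have hne : Nonempty E := ⟨x⟩
  have hm0 : (0:ℝ) < m := lt_of_lt_of_le one_pos hm
  set c : ℝ := ⨆ y, |U y| with hcdef
  have hcy : ∀ y, U y ≤ c := fun y => (le_abs_self _).trans (le_ciSup hUbdd y)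
  have hc0 : (0:ℝ) ≤ c := (abs_nonneg _).trans (le_ciSup hUbdd x)
  set t : ℝ := c / m with htdef
  have ht0 : 0 ≤ t := div_nonneg hc0 hm0.le
  have he1 : Real.exp (-t) ≤ 1 := Real.exp_le_one_iff.2 (neg_nonpos.2 ht0)
  set G : E → ℝ := fun y => Real.exp (-U y / m) with hGdef
  have hGmeas : Measurable G := (Real.measurable_exp.comp ((hU.neg).div_const m))
  have hG0 : ∀ y, 0 < G y := fun y => Real.exp_pos _
  have hG1 : ∀ y, G y ≤ 1 := by
    intro y
    rw [show (1:ℝ) = Real.exp 0 by simp]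
    exact Real.exp_le_exp.2 (div_nonpos_of_nonpos_of_nonneg (neg_nonpos.2 (hU0 y)) hm0.le)
  have hGlow : ∀ y, Real.exp (-t) ≤ G y := by
    intro y
    apply Real.exp_le_exp.2
    have h7 : U y / m ≤ c / m := by gcongr; exact hcy y
    rw [neg_div]
    simp only [htdef]
    linarith
  have hGbd : ∀ y, |G y| ≤ 1 := fun y => by rw [abs_of_pos (hG0 y)]; exact hG1 y
  have hGint : Integrable G μ := integrable_of_bdd hGmeas hGbd
  set Z : ℝ := ∫ y, G y ∂μ with hZdef
  have hZlow : Real.exp (-t) ≤ Z := by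
    calc Real.exp (-t) = ∫ _, Real.exp (-t) ∂μ := by simp
    _ ≤ Z := integral_mono (integrable_const _) hGint hGlow
  have hZ0 : 0 < Z := lt_of_lt_of_le (Real.exp_pos _) hZlow
  have hZ1 : Z ≤ 1 := by
    calc Z ≤ ∫ _, (1:ℝ) ∂μ := integral_mono hGint (integrable_const _) hG1
    _ = 1 := by simp
  have hZabs : |Z| ≤ 1 := by rw [abs_of_pos hZ0]; exact hZ1
  -- f is bounded
  have hfbd : ∀ y, |f y| ≤ |f x| + 1 := by
    intro y
    have := hosc y x
    calc |f y| = |f y - f x + f x| := by ring_nf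
    _ ≤ |f y - f x| + |f x| := abs_add_le _ _
    _ ≤ |f x| + 1 := by linarith
  have hfint : Integrable f μ := integrable_of_bdd hf hfbd
  -- the shifted function g
  have hbdd : BddBelow (Set.range f) := ⟨f x - 1, by
    rintro _ ⟨y, rfl⟩; have := abs_le.1 (hosc x y); linarith [this.2]⟩
  set c₀ : ℝ := ⨅ y, f y with hc₀def
  set g : E → ℝ := fun y => f y - c₀ with hgdef
  have hg0 : ∀ y, 0 ≤ g y := fun y => sub_nonneg.2 (ciInf_le hbdd y)
  have hg1 : ∀ y, g y ≤ 1 := by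
    intro y
    have : f y - 1 ≤ c₀ := le_ciInf (fun z => by have := abs_le.1 (hosc y z); linarith [this.2])
    simp only [hgdef]; linarith
  have hgmeas : Measurable g := hf.sub measurable_const
  have hgbd : ∀ y, |g y| ≤ 1 := fun y => abs_le.2 ⟨by linarith [hg0 y], hg1 y⟩
  have hgint : Integrable g μ := integrable_of_bdd hgmeas hgbd
  have hgGint : Integrable (fun y => g y * G y) μ :=
    integrable_of_bdd (hgmeas.mul hGmeas) (C := 1) (fun y => by
      rw [abs_mul]
      exact mul_le_one₀ (hgbd y) (abs_nonneg _) (hGbd y))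
  have hgZint : Integrable (fun y => g y * Z) μ :=
    integrable_of_bdd (hgmeas.mul measurable_const) (C := 1) (fun y => by
      rw [abs_mul]
      exact mul_le_one₀ (hgbd y) (abs_nonneg _) hZabs)
  have hggZint : Integrable (fun y => g y * (G y - Z)) μ :=
    integrable_of_bdd (hgmeas.mul (hGmeas.sub measurable_const)) (C := 2) (fun y => by
      rw [abs_mul]
      calc |g y| * |G y - Z| ≤ 1 * 2 := by
            apply mul_le_mul (hgbd y) _ (abs_nonneg _) zero_le_one
            calc |G y - Z| ≤ |G y| + |Z| := abs_sub _ _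
            _ ≤ 2 := by linarith [hGbd y]
      _ = 2 := by norm_num)
  have hfGint : Integrable (fun y => f y * G y) μ :=
    integrable_of_bdd (hf.mul hGmeas) (C := |f x| + 1) (fun y => by
      rw [abs_mul]
      calc |f y| * |G y| ≤ (|f x| + 1) * 1 :=
        mul_le_mul (hfbd y) (hGbd y) (abs_nonneg _) (by positivity)
      _ = |f x| + 1 := by ring)
  have hposint : Integrable (fun y => max (G y - Z) 0) μ :=
    integrable_of_bdd ((hGmeas.sub measurable_const).max measurable_const)
      (C := 1) (fun y => by
        rw [abs_of_nonneg (le_max_right _ _)]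
        exact max_le (by linarith [hG1 y]) zero_le_one)
  have hnegint : Integrable (fun y => max (Z - G y) 0) μ :=
    integrable_of_bdd ((measurable_const.sub hGmeas).max measurable_const)
      (C := 1) (fun y => by
        rw [abs_of_nonneg (le_max_right _ _)]
        exact max_le (by linarith [(hG0 y).le]) zero_le_one)
  -- key estimate
  have hkey : |(∫ y, f y * G y ∂μ) / Z - ∫ y, f y ∂μ| ≤ 1 - Real.exp (-t) := by
    have hfG : (∫ y, f y * G y ∂μ) = (∫ y, g y * G y ∂μ) + c₀ * Z := by
      rw [hZdef, ← integral_const_mul]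
      rw [← integral_add hgGint (hGint.const_mul c₀)]
      congr 1; funext y; simp only [hgdef]; ring
    have hfI : (∫ y, f y ∂μ) = (∫ y, g y ∂μ) + c₀ := by
      have h1 : (∫ y, f y ∂μ) = ∫ y, (g y + c₀) ∂μ := by
        congr 1; funext y; simp [hgdef]
      rw [h1, integral_add hgint (integrable_const _)]; simp
    have heq : (∫ y, f y * G y ∂μ) / Z - ∫ y, f y ∂μ
        = (∫ y, g y * (G y - Z) ∂μ) / Z := by
      have h2 : (∫ y, g y * (G y - Z) ∂μ) = (∫ y, g y * G y ∂μ) - (∫ y, g y ∂μ) * Z := by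
        rw [← integral_mul_const]
        rw [← integral_sub hgGint hgZint]
        congr 1; funext y; ring
      rw [hfG, hfI, h2]
      field_simp
      ring
    rw [heq, abs_div, abs_of_pos hZ0, div_le_iff₀ hZ0]
    have hNP : (∫ y, max (G y - Z) 0 ∂μ) = ∫ y, max (Z - G y) 0 ∂μ := by
      have h0 : (∫ y, (G y - Z) ∂μ) = 0 := by
        rw [integral_sub hGint (integrable_const _)]; simp [hZdef]
      have hpt : ∀ y, max (G y - Z) 0 - max (Z - G y) 0 = G y - Z := by
        intro y
        rcases le_total (G y) Z with h | h
        · rw [max_eq_right (by linarith), max_eq_left (by linarith)]; ring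
        · rw [max_eq_left (by linarith), max_eq_right (by linarith)]; ring
      have h3 : (∫ y, (max (G y - Z) 0 - max (Z - G y) 0) ∂μ) = 0 := by
        rw [integral_congr_ae (Filter.Eventually.of_forall hpt)]
        exact h0
      rw [integral_sub hposint hnegint] at h3
      linarith
    have hNbound : (∫ y, max (Z - G y) 0 ∂μ) ≤ (1 - Real.exp (-t)) * Z := by
      calc (∫ y, max (Z - G y) 0 ∂μ) ≤ ∫ _, (1 - Real.exp (-t)) * Z ∂μ := by
            apply integral_mono hnegint (integrable_const _)
            intro y
            dsimp only
            have h4 : Real.exp (-t) * Z ≤ G y :=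
              calc Real.exp (-t) * Z ≤ Real.exp (-t) * 1 :=
                    mul_le_mul_of_nonneg_left hZ1 (Real.exp_pos _).le
              _ = Real.exp (-t) := mul_one _
              _ ≤ G y := hGlow y
            apply max_le (by nlinarith) (by nlinarith)
      _ = (1 - Real.exp (-t)) * Z := by simp
    rw [abs_le]
    constructor
    · have h5 : (∫ y, -(g y * (G y - Z)) ∂μ) ≤ ∫ y, max (Z - G y) 0 ∂μ := by
        apply integral_mono hggZint.neg hnegint
        intro y
        dsimp only
        rcases le_total (G y) Z with h | h
        · calc -(g y * (G y - Z)) = g y * (Z - G y) := by ring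
          _ ≤ 1 * (Z - G y) := mul_le_mul_of_nonneg_right (hg1 y) (by linarith)
          _ = Z - G y := one_mul _
          _ ≤ max (Z - G y) 0 := le_max_left _ _
        · calc -(g y * (G y - Z)) ≤ 0 :=
                neg_nonpos_of_nonneg (mul_nonneg (hg0 y) (by linarith))
          _ ≤ max (Z - G y) 0 := le_max_right _ _
      rw [integral_neg] at h5
      linarith [hNbound]
    · have h6 : (∫ y, g y * (G y - Z) ∂μ) ≤ ∫ y, max (G y - Z) 0 ∂μ := by
        apply integral_mono hggZint hposint
        intro y
        dsimp only
        rcases le_total Z (G y) with h | h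
        · calc g y * (G y - Z) ≤ 1 * (G y - Z) :=
                mul_le_mul_of_nonneg_right (hg1 y) (by linarith)
          _ = G y - Z := one_mul _
          _ ≤ max (G y - Z) 0 := le_max_left _ _
        · calc g y * (G y - Z) ≤ 0 :=
                mul_nonpos_of_nonneg_of_nonpos (hg0 y) (by linarith)
          _ ≤ max (G y - Z) 0 := le_max_right _ _
      rw [hNP] at h6
      linarith [hNbound]
  -- put everything together
  have hGx1 : 1 - G x ≤ 1 - Real.exp (-t) := by linarith [hGlow x]
  have hGx0 : 0 ≤ 1 - G x := by linarith [hG1 x]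
  have hexp : 1 - Real.exp (-t) ≤ t := by nlinarith [Real.add_one_le_exp (-t)]
  have hexp0 : 0 ≤ 1 - Real.exp (-t) := by linarith
  calc |(Real.exp (-U x / m) * f x
          + (1 - Real.exp (-U x / m)) *
            ((∫ y, f y * Real.exp (-U y / m) ∂μ) / (∫ y, Real.exp (-U y / m) ∂μ)))
        - (Real.exp (-U x / m) * f x
          + (1 - Real.exp (-U x / m)) * (∫ y, f y ∂μ))|
      = (1 - G x) * |(∫ y, f y * G y ∂μ) / Z - ∫ y, f y ∂μ| := by
        rw [show (Real.exp (-U x / m) * f x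
          + (1 - Real.exp (-U x / m)) *
            ((∫ y, f y * Real.exp (-U y / m) ∂μ) / (∫ y, Real.exp (-U y / m) ∂μ)))
        - (Real.exp (-U x / m) * f x
          + (1 - Real.exp (-U x / m)) * (∫ y, f y ∂μ))
          = (1 - G x) * ((∫ y, f y * G y ∂μ) / Z - ∫ y, f y ∂μ) by
            simp only [hGdef, hZdef]; ring]
        rw [abs_mul, abs_of_nonneg hGx0]
    _ ≤ (1 - Real.exp (-t)) * (1 - Real.exp (-t)) :=
        mul_le_mul hGx1 hkey (abs_nonneg _) hexp0
    _ ≤ t * t := mul_le_mul hexp hexp hexp0 ht0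
    _ = c ^ 2 / m ^ 2 := by
        rw [htdef]; field_simp
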